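/- Let the x-axis L ⊆ ℝ², v = (3/5, 0), and M the line through v and (1,1). Let L' be the half-line of L from v in the positive x direction, L'' the opposite half-line, M' the half-line of M from v into the first quadrant, and M'' the opposite half-line. Then no γ ∈ GL(2,ℤ) ⋉ ℤ² maps L' onto L'' and M' onto M'' (i.e., the vertical angles (L',M') and (L'',M'') do not have the same orbit). -/

import Mathlib

open scoped BigOperators

noncomputable section

/-- Embedding of a rational point of ℚⁿ into ℝⁿ. -/
def toR {n : ℕ} (x : Fin n → ℚ) : Fin n → ℝ := fun i => (x i : ℝ)

/-- Least common denominator of a rational point. -/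
def den {n : ℕ} (x : Fin n → ℚ) : ℕ := Finset.univ.lcm fun i => (x i).den

/-- Homogeneous correspondent x̃ = (den(x)·x, den(x)) ∈ ℤ^{n+1}. -/
def homog {n : ℕ} (x : Fin n → ℚ) : Fin (n + 1) → ℤ :=
  Fin.snoc (fun i => ((den x : ℚ) * x i).num) (den x)

/-- A rational d-simplex, given by its vertices, is Farey-regular if the vertices are
affinely independent and their homogeneous correspondents extend to a ℤ-basis of ℤ^{n+1}. -/
def IsFareyRegular {n d : ℕ} (v : Fin (d + 1) → Fin n → ℚ) : Prop :=
  AffineIndependent ℝ (fun i => toR (v i)) ∧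
  ∃ (b : Module.Basis (Fin (n + 1)) ℤ (Fin (n + 1) → ℤ)) (ι : Fin (d + 1) → Fin (n + 1)),
    Function.Injective ι ∧ ∀ i, b (ι i) = homog (v i)

/-- A rational segment conv(a,b) is Farey-regular. -/
def SegRegular {n : ℕ} (a b : Fin n → ℚ) : Prop := IsFareyRegular ![a, b]

/-- Maps in GL(n,ℤ) ⋉ ℤⁿ : x ↦ Mx + t with M an integer matrix with det ±1. -/
def IsUnimodularAffine {n : ℕ} (γ : (Fin n → ℝ) → Fin n → ℝ) : Prop :=
  ∃ (M : Matrix (Fin n) (Fin n) ℤ) (t : Fin n → ℤ), IsUnit M.det ∧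
    ∀ x, γ x = fun i => (∑ j, (M i j : ℝ) * x j) + (t i : ℝ)

/-- A rational affine space: an intersection of rational affine hyperplanes of ℝⁿ. -/
def IsRatAffineSpace {n : ℕ} (F : Set (Fin n → ℝ)) : Prop :=
  ∃ (ι : Type) (p : ι → Fin n → ℚ) (c : ι → ℚ), (∀ i, p i ≠ 0) ∧
    F = ⋂ i, {z | (∑ j, (p i j : ℝ) * z j) = (c i : ℝ)}

/-- Affine dimension of a subset of ℝⁿ. -/
def affDim {n : ℕ} (F : Set (Fin n → ℝ)) : ℕ :=
  Module.finrank ℝ (vectorSpan ℝ F)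

/-- d_F: least denominator of a rational point of F. -/
def dF {n : ℕ} (F : Set (Fin n → ℝ)) : ℕ :=
  sInf {d | ∃ v : Fin n → ℚ, toR v ∈ F ∧ den v = d}

/-- c_F: least denominator of a rational point v such that conv(v,v₀,…,v_e) is a
Farey-regular (e+1)-simplex for some v₀,…,v_e ∈ F ∩ ℚⁿ (e = dim F < n); c_F = 1 if dim F = n. -/
def cF {n : ℕ} (F : Set (Fin n → ℝ)) : ℕ :=
  if affDim F = n then 1 else
  sInf {c | ∃ (v : Fin n → ℚ) (w : Fin (affDim F + 1) → Fin n → ℚ),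
    (∀ i, toR (w i) ∈ F) ∧ IsFareyRegular (Fin.cons v w) ∧ den v = c}

/-- Euclidean distance on ℝⁿ. -/
def eudist {n : ℕ} (x y : Fin n → ℝ) : ℝ := Real.sqrt (∑ i, (x i - y i) ^ 2)

/-- The sequence a = x₀, x₁, …, x_{u+1} = b of consecutive vertices of the
Hirzebruch–Jung triangulation of the rational segment conv(a,b): each x_{i+1} is the
farthest rational point z from xᵢ in conv(a,b) such that conv(xᵢ,z) is Farey-regular. -/
def IsHJSeq {n : ℕ} (a b : Fin n → ℚ) {u : ℕ} (x : Fin (u + 2) → Fin n → ℚ) : Prop :=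
  x 0 = a ∧ x (Fin.last (u + 1)) = b ∧
  ∀ i : Fin (u + 1),
    toR (x i.succ) ∈ segment ℝ (toR a) (toR b) ∧
    SegRegular (x i.castSucc) (x i.succ) ∧
    ∀ z : Fin n → ℚ, toR z ∈ segment ℝ (toR a) (toR b) →
      SegRegular (x i.castSucc) z →
      eudist (toR z) (toR (x i.castSucc)) ≤ eudist (toR (x i.succ)) (toR (x i.castSucc))

/-- A regular triangulation of the rational segment conv(a,b), described by its
consecutive vertices a = y₀, …, y_{k+1} = b: consecutive 1-simplexes are Farey-regular. -/
def IsRegTriSeq {n : ℕ} (a b : Fin n → ℚ) {k : ℕ} (y : Fin (k + 2) → Fin n → ℚ) : Prop :=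
  y 0 = a ∧ y (Fin.last (k + 1)) = b ∧
  ∀ i : Fin (k + 1),
    toR (y i.succ) ∈ segment ℝ (toR (y i.castSucc)) (toR b) ∧
    SegRegular (y i.castSucc) (y i.succ)

/-- A rational half-line with rational origin v: {v + t(w - v) : t ≥ 0} for some rational w ≠ v. -/
def IsRatHalfLine {n : ℕ} (H : Set (Fin n → ℝ)) (v : Fin n → ℚ) : Prop :=
  ∃ w : Fin n → ℚ, w ≠ v ∧
    H = {P | ∃ t : ℝ, 0 ≤ t ∧ P = fun i => toR v i + t * (toR w i - toR v i)}

/-- With v = (3/5,0), L',L'' the two half-lines of the x-axis at v, and M',M'' the two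
half-lines at v of the line through v and (1,1): no γ ∈ GL(2,ℤ) ⋉ ℤ² maps L' onto L''
and M' onto M'', i.e., the vertical angles (L',M') and (L'',M'') do not have the same
orbit. -/
theorem vertical_angles_not_equivalent :
    ¬ ∃ γ : (Fin 2 → ℝ) → Fin 2 → ℝ, IsUnimodularAffine γ ∧
      γ '' {P : Fin 2 → ℝ | ∃ t : ℝ, 0 ≤ t ∧ P = ![3 / 5 + t, 0]} =
        {P : Fin 2 → ℝ | ∃ t : ℝ, 0 ≤ t ∧ P = ![3 / 5 - t, 0]} ∧
      γ '' {P : Fin 2 → ℝ | ∃ t : ℝ, 0 ≤ t ∧ P = ![3 / 5 + t * (2 / 5), t]} =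
        {P : Fin 2 → ℝ | ∃ t : ℝ, 0 ≤ t ∧ P = ![3 / 5 - t * (2 / 5), -t]} := by
  rintro ⟨γ, ⟨M, T, hdet, hγ⟩, h1, -⟩
  have hfwd : ∀ t : ℝ, 0 ≤ t → ∃ s : ℝ, 0 ≤ s ∧
      (M 0 0 : ℝ) * (3/5 + t) + T 0 = 3/5 - s ∧ (M 1 0 : ℝ) * (3/5 + t) + T 1 = 0 := by
    intro t ht
    have hx : γ ![3/5 + t, 0] ∈ γ '' {P : Fin 2 → ℝ | ∃ t : ℝ, 0 ≤ t ∧ P = ![3 / 5 + t, 0]} :=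
      Set.mem_image_of_mem γ ⟨t, ht, rfl⟩
    rw [h1] at hx
    obtain ⟨s, hs, heq⟩ := hx
    rw [hγ] at heq
    have h0 := congrFun heq 0
    have h1' := congrFun heq 1
    simp [Fin.sum_univ_two] at h0 h1'
    exact ⟨s, hs, by linarith, by linarith⟩
  have hbwd : ∀ s : ℝ, 0 ≤ s → ∃ t : ℝ, 0 ≤ t ∧
      (M 0 0 : ℝ) * (3/5 + t) + T 0 = 3/5 - s := by
    intro s hs
    have hx : (![3/5 - s, 0] : Fin 2 → ℝ) ∈
        γ '' {P : Fin 2 → ℝ | ∃ t : ℝ, 0 ≤ t ∧ P = ![3 / 5 + t, 0]} := by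
      rw [h1]; exact ⟨s, hs, rfl⟩
    obtain ⟨x, ⟨t, ht, hxx⟩, heq⟩ := hx
    subst hxx
    rw [hγ] at heq
    have h0 := congrFun heq 0
    simp [Fin.sum_univ_two] at h0
    exact ⟨t, ht, by linarith⟩
  set A : ℝ := (M 0 0 : ℝ) with hA
  set P : ℝ := (T 0 : ℝ) with hP
  -- upper bound
  obtain ⟨s₀, hs₀, he₀, hc₀⟩ := hfwd 0 le_rfl
  obtain ⟨s₁, hs₁, he₁, hc₁⟩ := hfwd 1 zero_le_one
  -- M 1 0 = 0
  have hcR : (M 1 0 : ℝ) = 0 := by linarith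
  have hc : M 1 0 = 0 := by exact_mod_cast hcR
  -- A < 0
  have hub : A * (3/5) + P ≤ 3/5 := by linarith
  obtain ⟨t₂, ht₂, he₂⟩ := hbwd (3/5 - (A * (3/5) + P) + 1) (by linarith)
  have hAneg : A < 0 := by nlinarith
  obtain ⟨t₃, ht₃, he₃⟩ := hbwd 0 le_rfl
  have ht₃A : t₃ * A = 0 := by nlinarith
  have hkey : A * (3/5) + P = 3/5 := by nlinarith [he₃, ht₃A]
  -- determinant
  have hdet2 : M.det = M 0 0 * M 1 1 - M 0 1 * M 1 0 := by
    rw [Matrix.det_fin_two]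
  rw [hdet2, hc] at hdet
  simp at hdet
  have ha : M 0 0 = 1 ∨ M 0 0 = -1 := Int.isUnit_iff.mp hdet.1
  have ha' : M 0 0 = -1 := by
    rcases ha with h | h
    · exfalso; rw [hA, h] at hAneg; norm_num at hAneg
    · exact h
  rw [hA, ha'] at hkey
  push_cast at hkey
  have : (T 0 : ℝ) = 6/5 := by linarith
  have h5 : ((5 * T 0 : ℤ) : ℝ) = (6 : ℤ) := by push_cast; linarith
  have := Int.cast_injective h5
  omega
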